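/- If F ∈ C²(Γ₊) is symmetric, homogeneous of degree 1, strictly monotone (∂F/∂κᵢ > 0), positive, and satisfies the class (K) Hessian inequality ∂²F/∂κᵢ∂κⱼ ≤ F⁻¹ Fᵢ Fⱼ - Fᵢ κⱼ⁻¹ δᵢⱼ (as quadratic forms), then F is strictly concave: for any κ ∈ Γ₊ and any nonzero ξ ∈ ℝⁿ not proportional to κ, D²F(κ)(ξ,ξ) < 0. -/

import Mathlib

open Finset

/-- a curvature function of class (K) is strictly concave.
Here `g i = Fᵢ = ∂F/∂κᵢ > 0`, `A i j` is the Hessian `∂²F/∂κᵢ∂κⱼ`,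
`∑ gᵢκᵢ = F` is the Euler relation (degree-1 homogeneity), and the class (K)
inequality `D²F ≤ F⁻¹ DF⊗DF - diag(Fᵢ κᵢ⁻¹)` is assumed as quadratic forms.
Then `D²F(κ)(ξ,ξ) < 0` for every nonzero `ξ` not proportional to `κ`. -/
theorem classK_strictly_concave (n : ℕ) (κ ξ g : Fin n → ℝ)
    (A : Fin n → Fin n → ℝ) (F : ℝ)
    (hκ : ∀ i, 0 < κ i) (hg : ∀ i, 0 < g i) (hF : 0 < F)
    (hEuler : ∑ i, g i * κ i = F)
    (hHess : ∀ η : Fin n → ℝ,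
      ∑ i, ∑ j, A i j * η i * η j
        ≤ F⁻¹ * (∑ i, g i * η i) ^ 2 - ∑ i, g i * (κ i)⁻¹ * (η i) ^ 2)
    (hξ : ξ ≠ 0) (hnotprop : ∀ lam : ℝ, ξ ≠ lam • κ) :
    ∑ i, ∑ j, A i j * ξ i * ξ j < 0 := by
  set S := ∑ i, g i * ξ i with hS
  set lam := S / F with hlam
  -- ξ is not lam • κ, so some coordinate differs
  have hne : ξ ≠ lam • κ := hnotprop lam
  obtain ⟨i₀, hi₀⟩ : ∃ i, ξ i ≠ lam * κ i := by
    by_contra h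
    push_neg at h
    exact hne (funext fun i => h i)
  -- the quadratic form ∑ g κ⁻¹ (ξ - lam κ)² is strictly positive
  have hpos : 0 < ∑ i, g i * (κ i)⁻¹ * (ξ i - lam * κ i) ^ 2 := by
    apply Finset.sum_pos' (fun i _ => mul_nonneg
      (mul_nonneg (hg i).le (inv_nonneg.mpr (hκ i).le)) (sq_nonneg _))
    refine ⟨i₀, Finset.mem_univ _, ?_⟩
    have h1 : (0:ℝ) < (ξ i₀ - lam * κ i₀) ^ 2 := by
      have := sub_ne_zero.mpr hi₀
      positivity
    have h2 : 0 < g i₀ * (κ i₀)⁻¹ := by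
      have := hκ i₀; have := hg i₀; positivity
    positivity
  -- expand the square
  have expand : ∑ i, g i * (κ i)⁻¹ * (ξ i - lam * κ i) ^ 2
      = (∑ i, g i * (κ i)⁻¹ * ξ i ^ 2) - 2 * lam * S + lam ^ 2 * F := by
    rw [← hEuler, hS, Finset.mul_sum, Finset.mul_sum, ← Finset.sum_sub_distrib,
      ← Finset.sum_add_distrib]
    apply Finset.sum_congr rfl
    intro i _
    have hκi := (hκ i).ne'
    field_simp
    ring
  rw [expand] at hpos
  have hCS : F⁻¹ * S ^ 2 < ∑ i, g i * (κ i)⁻¹ * ξ i ^ 2 := by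
    have hlamF : lam * F = S := by
      rw [hlam, div_mul_cancel₀ S hF.ne']
    have h1 : F⁻¹ * S ^ 2 = lam ^ 2 * F := by
      field_simp [hlam]
      rw [← hlamF]; ring
    have h2 : 2 * lam * S = 2 * (lam ^ 2 * F) := by
      rw [← hlamF]; ring
    linarith
  have := hHess ξ
  rw [← hS] at this
  linarith
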